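/- arXiv:2006.14774 — 3 statements merged into one kernel-verified Lean document; each statement's English description precedes it below -/
import Mathlib

section
/- If in addition Σ is Hermitian positive definite, then the achievable-rate determinant and the minimum mean-squared-error matrix are related by det(I_k + S Σ Sᴴ R_in⁻¹) · det(E*) = det(Σ); equivalently, the rate satisfies log det(I_k + S Σ Sᴴ R_in⁻¹) = log det(Σ (E*)⁻¹). -/
open Matrix
open scoped ComplexOrder

/-- if `Σ` is positive definite then
`det(I + S Σ Sᴴ R_in⁻¹) · det(E*) = det(Σ)`, equivalently
`log det(I + S Σ Sᴴ R_in⁻¹) = log det(Σ (E*)⁻¹)` (both determinants being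
positive reals). -/
theorem rate_eq_logdet_mmse {k n : ℕ}
    (S : Matrix (Fin k) (Fin n) ℂ) (Sg : Matrix (Fin n) (Fin n) ℂ)
    (Rin : Matrix (Fin k) (Fin k) ℂ)
    (hSg : Sg.PosDef) (hRin : Rin.PosDef) :
    ((1 : Matrix (Fin k) (Fin k) ℂ) + S * Sg * Sᴴ * Rin⁻¹).det *
        (Sg - Sg * Sᴴ * (S * Sg * Sᴴ + Rin)⁻¹ * S * Sg).det = Sg.det ∧
    Real.log (((1 : Matrix (Fin k) (Fin k) ℂ) + S * Sg * Sᴴ * Rin⁻¹).det).re =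
      Real.log ((Sg * (Sg - Sg * Sᴴ * (S * Sg * Sᴴ + Rin)⁻¹ * S * Sg)⁻¹).det).re := by
  set R : Matrix (Fin k) (Fin k) ℂ := S * Sg * Sᴴ + Rin with hRdef
  have hR : R.PosDef :=
    Matrix.PosDef.posSemidef_add (hSg.posSemidef.mul_mul_conjTranspose_same S) hRin
  have hSgdet : Sg.det ≠ 0 := hSg.det_pos.ne'
  have hRindet : Rin.det ≠ 0 := hRin.det_pos.ne'
  have hRdet : R.det ≠ 0 := hR.det_pos.ne'
  haveI : Invertible Sg := Sg.invertibleOfIsUnitDet hSgdet.isUnit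
  haveI : Invertible R := R.invertibleOfIsUnitDet hRdet.isUnit
  -- block matrix determinant identities
  have hblk1 : (Matrix.fromBlocks Sg (Sg * Sᴴ) (S * Sg) R).det = Sg.det * Rin.det := by
    rw [Matrix.det_fromBlocks₁₁]
    congr 1
    have : S * Sg * ⅟Sg * (Sg * Sᴴ) = S * Sg * Sᴴ := by
      rw [Matrix.invOf_eq_nonsing_inv, Matrix.mul_nonsing_inv_cancel_right _ _
        hSgdet.isUnit, Matrix.mul_assoc]
    rw [this, hRdef, add_sub_cancel_left]
  have hblk2 : (Matrix.fromBlocks Sg (Sg * Sᴴ) (S * Sg) R).det =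
      R.det * (Sg - Sg * Sᴴ * R⁻¹ * S * Sg).det := by
    rw [Matrix.det_fromBlocks₂₂]
    congr 2
    rw [Matrix.invOf_eq_nonsing_inv]
    simp only [Matrix.mul_assoc]
  have hI : ((1 : Matrix (Fin k) (Fin k) ℂ) + S * Sg * Sᴴ * Rin⁻¹).det * Rin.det = R.det := by
    rw [← Matrix.det_mul, Matrix.add_mul, Matrix.one_mul,
      Matrix.nonsing_inv_mul_cancel_right _ _
        hRindet.isUnit, hRdef, add_comm]
  have key : ((1 : Matrix (Fin k) (Fin k) ℂ) + S * Sg * Sᴴ * Rin⁻¹).det *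
      (Sg - Sg * Sᴴ * R⁻¹ * S * Sg).det = Sg.det := by
    have := hblk1.symm.trans hblk2
    have h2 : (((1 : Matrix (Fin k) (Fin k) ℂ) + S * Sg * Sᴴ * Rin⁻¹).det *
        (Sg - Sg * Sᴴ * R⁻¹ * S * Sg).det) * Rin.det = Sg.det * Rin.det := by
      calc (((1 : Matrix (Fin k) (Fin k) ℂ) + S * Sg * Sᴴ * Rin⁻¹).det *
          (Sg - Sg * Sᴴ * R⁻¹ * S * Sg).det) * Rin.det
          = (((1 : Matrix (Fin k) (Fin k) ℂ) + S * Sg * Sᴴ * Rin⁻¹).det * Rin.det) *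
            (Sg - Sg * Sᴴ * R⁻¹ * S * Sg).det := by ring
        _ = R.det * (Sg - Sg * Sᴴ * R⁻¹ * S * Sg).det := by rw [hI]
        _ = Sg.det * Rin.det := by rw [← hblk2, hblk1]
    exact mul_right_cancel₀ hRindet h2
  refine ⟨key, ?_⟩
  have hEdet : (Sg - Sg * Sᴴ * R⁻¹ * S * Sg).det ≠ 0 := by
    intro h
    rw [h, mul_zero] at key
    exact hSgdet key.symm
  have : ((1 : Matrix (Fin k) (Fin k) ℂ) + S * Sg * Sᴴ * Rin⁻¹).det =
      (Sg * (Sg - Sg * Sᴴ * R⁻¹ * S * Sg)⁻¹).det := by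
    rw [Matrix.det_mul, Matrix.det_nonsing_inv, Ring.inverse_eq_inv]
    exact (eq_mul_inv_iff_mul_eq₀ hEdet).mpr key
  rw [this]
end

section
/- Suppose in addition that Σ is Hermitian positive definite. Then the infimum over all n×k complex matrices U and all n×n Hermitian positive definite matrices W of the weighted-MMSE objective tr(W E(U)) − log det(W) equals n + log det(Σ) − log det(I_k + S Σ Sᴴ R_in⁻¹), and it is attained at U* = Σ Sᴴ R⁻¹ and W* = E(U*)⁻¹. Consequently, over any family of matrices S, maximizing the mutual-information rate log det(I_k + S Σ Sᴴ R_in⁻¹) is equivalent to minimizing the jointly optimized weighted-MMSE objective. -/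
open Matrix
open scoped ComplexOrder

theorem my_trace_eq {n : ℕ} {A : Matrix (Fin n) (Fin n) ℂ} (hA : A.IsHermitian) :
    A.trace = ∑ i, (hA.eigenvalues i : ℂ) := by
  exact hA.trace_eq_sum_eigenvalues

theorem trace_sub_logdet {n : ℕ} {M : Matrix (Fin n) (Fin n) ℂ} (hM : M.PosDef) :
    (n : ℝ) + Real.log M.det.re ≤ M.trace.re := by
  have he : M.det = ((∏ i, hM.1.eigenvalues i : ℝ) : ℂ) := by
    rw [hM.1.det_eq_prod_eigenvalues]; push_cast; rfl
  have ht : M.trace.re = ∑ i, hM.1.eigenvalues i := by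
    rw [my_trace_eq hM.1]; push_cast [Complex.re_sum]; rfl
  rw [he, ht, Complex.ofReal_re,
    Real.log_prod (fun i _ => (hM.eigenvalues_pos i).ne')]
  have : ∀ i ∈ Finset.univ, (1 : ℝ) + Real.log (hM.1.eigenvalues i) ≤ hM.1.eigenvalues i := by
    intro i _
    have := Real.log_le_sub_one_of_pos (hM.eigenvalues_pos i)
    linarith
  calc (n : ℝ) + ∑ i, Real.log (hM.1.eigenvalues i)
      = ∑ i : Fin n, (1 + Real.log (hM.1.eigenvalues i)) := by
        rw [Finset.sum_add_distrib]; simp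
    _ ≤ ∑ i, hM.1.eigenvalues i := Finset.sum_le_sum this

theorem posDef_conj {n : ℕ} {W B : Matrix (Fin n) (Fin n) ℂ} (hW : W.PosDef)
    (hB : IsUnit B) : (Bᴴ * W * B).PosDef := by
  exact (Matrix.IsUnit.posDef_star_left_conjugate_iff hB).mpr hW

theorem det_re_pos {n : ℕ} {M : Matrix (Fin n) (Fin n) ℂ} (hM : M.PosDef) :
    0 < M.det.re ∧ M.det.im = 0 := by
  have h := hM.det_pos
  rw [Complex.lt_def] at h
  simp at h
  exact ⟨h.1, h.2.symm⟩

open scoped MatrixOrder in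
theorem weighted_ineq {n : ℕ} {W P : Matrix (Fin n) (Fin n) ℂ}
    (hW : W.PosDef) (hP : P.PosDef) :
    (n : ℝ) + Real.log P.det.re ≤ (W * P).trace.re - Real.log W.det.re := by
  set s := CFC.sqrt P with hs_def
  have hs : s * s = P := CFC.sqrt_mul_sqrt_self P hP.posSemidef.nonneg
  have hsH : sᴴ = s := (CFC.sqrt_nonneg P).posSemidef.1
  have hdet_s : s.det * s.det = P.det := by rw [← det_mul, hs]
  have hsUnit : IsUnit s := by
    rw [isUnit_iff_isUnit_det]
    exact isUnit_of_mul_isUnit_left (x := s.det) (hdet_s ▸ hP.det_pos.ne'.isUnit)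
  have hM : (sᴴ * W * s).PosDef := posDef_conj hW hsUnit
  have key := trace_sub_logdet hM
  have htr : (sᴴ * W * s).trace = (W * P).trace := by
    rw [hsH, Matrix.trace_mul_comm, ← mul_assoc, hs, Matrix.trace_mul_comm]
  have hdet : (sᴴ * W * s).det = W.det * P.det := by
    rw [hsH, det_mul, det_mul, ← hdet_s]; ring
  have hWre := det_re_pos hW
  have hPre := det_re_pos hP
  have hre : (sᴴ * W * s).det.re = W.det.re * P.det.re := by
    rw [hdet, Complex.mul_re, hWre.2, hPre.2]; ring
  rw [htr, hre, Real.log_mul hWre.1.ne' hPre.1.ne'] at key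
  linarith

open scoped MatrixOrder in
theorem trace_mul_psd_nonneg {n : ℕ} {W Q : Matrix (Fin n) (Fin n) ℂ}
    (hW : W.PosDef) (hQ : Q.PosSemidef) : 0 ≤ (W * Q).trace.re := by
  obtain ⟨B, hB⟩ := CStarAlgebra.nonneg_iff_eq_star_mul_self.mp hQ.nonneg
  rw [star_eq_conjTranspose] at hB
  subst hB
  have h : (W * (Bᴴ * B)).trace = (B * W * Bᴴ).trace := by
    rw [Matrix.trace_mul_comm, mul_assoc, ← Matrix.trace_mul_comm (Bᴴ), ← mul_assoc]
  rw [h]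
  have hP : (B * W * Bᴴ).PosSemidef := hW.posSemidef.mul_mul_conjTranspose_same B
  have : ∀ i, 0 ≤ ((B * W * Bᴴ) i i).re := fun i => by
    have := hP.dotProduct_mulVec_nonneg (fun j => if j = i then 1 else 0)
    rw [Complex.le_def] at this
    have h2 := this.1
    simpa [dotProduct, mulVec, Finset.sum_ite_eq] using h2
  rw [Matrix.trace, Complex.re_sum]
  exact Finset.sum_nonneg fun i _ => this i

theorem wmmse_rate_equivalence {k n : ℕ}
    (S : Matrix (Fin k) (Fin n) ℂ) (Sg : Matrix (Fin n) (Fin n) ℂ)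
    (Rin : Matrix (Fin k) (Fin k) ℂ)
    (hSg : Sg.PosDef) (hRin : Rin.PosDef) :
    (∀ (U : Matrix (Fin n) (Fin k) ℂ) (W : Matrix (Fin n) (Fin n) ℂ), W.PosDef →
      (n : ℝ) + Real.log Sg.det.re -
          Real.log (((1 : Matrix (Fin k) (Fin k) ℂ) + S * Sg * Sᴴ * Rin⁻¹).det).re ≤
        ((W * (Sg - U * S * Sg - Sg * Sᴴ * Uᴴ
            + U * (S * Sg * Sᴴ + Rin) * Uᴴ)).trace).re - Real.log W.det.re) ∧
    ((((Sg - Sg * Sᴴ * (S * Sg * Sᴴ + Rin)⁻¹ * S * Sg)⁻¹ *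
          (Sg - (Sg * Sᴴ * (S * Sg * Sᴴ + Rin)⁻¹) * S * Sg
            - Sg * Sᴴ * (Sg * Sᴴ * (S * Sg * Sᴴ + Rin)⁻¹)ᴴ
            + (Sg * Sᴴ * (S * Sg * Sᴴ + Rin)⁻¹) * (S * Sg * Sᴴ + Rin)
                * (Sg * Sᴴ * (S * Sg * Sᴴ + Rin)⁻¹)ᴴ)).trace).re -
        Real.log (((Sg - Sg * Sᴴ * (S * Sg * Sᴴ + Rin)⁻¹ * S * Sg)⁻¹).det).re =
      (n : ℝ) + Real.log Sg.det.re -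
        Real.log (((1 : Matrix (Fin k) (Fin k) ℂ) + S * Sg * Sᴴ * Rin⁻¹).det).re) := by
  obtain ⟨R, hR_def⟩ : ∃ R, R = S * Sg * Sᴴ + Rin := ⟨_, rfl⟩
  have hR : R.PosDef := hR_def ▸
    Matrix.PosDef.posSemidef_add (hSg.posSemidef.mul_mul_conjTranspose_same S) hRin
  have hRdet : IsUnit R.det := hR.det_pos.ne'.isUnit
  have hSgH : Sgᴴ = Sg := hSg.1
  have hRinvH : (R⁻¹)ᴴ = R⁻¹ := (hR.1.inv)
  obtain ⟨Ustar, hU_def⟩ : ∃ U, U = Sg * Sᴴ * R⁻¹ := ⟨_, rfl⟩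
  obtain ⟨Estar, hE_def⟩ : ∃ E, E = Sg - Sg * Sᴴ * R⁻¹ * S * Sg := ⟨_, rfl⟩
  have hUstarH : Ustarᴴ = R⁻¹ * (S * Sg) := by
    rw [hU_def, conjTranspose_mul, conjTranspose_mul, hRinvH, hSgH,
      conjTranspose_conjTranspose]
  have key : ∀ U : Matrix (Fin n) (Fin k) ℂ,
      Sg - U * S * Sg - Sg * Sᴴ * Uᴴ + U * R * Uᴴ
        = Estar + (U - Ustar) * R * (U - Ustar)ᴴ := by
    intro U
    rw [conjTranspose_sub, hUstarH, hE_def, hU_def]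
    simp only [Matrix.sub_mul, Matrix.mul_sub]
    simp only [Matrix.mul_assoc, Matrix.nonsing_inv_mul_cancel_left _ _ hRdet,
      Matrix.mul_nonsing_inv_cancel_left _ _ hRdet]
    abel
  -- invertibility facts
  have hSgdet : IsUnit Sg.det := hSg.det_pos.ne'.isUnit
  have hRindet : IsUnit Rin.det := hRin.det_pos.ne'.isUnit
  have hSSgS : S * Sg * Sᴴ = R - Rin := by rw [hR_def]; abel
  obtain ⟨F, hF_def⟩ : ∃ F, F = Sg⁻¹ + Sᴴ * Rin⁻¹ * S := ⟨_, rfl⟩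
  have hF : F.PosDef := hF_def ▸
    Matrix.PosDef.add_posSemidef hSg.inv (hRin.inv.posSemidef.conjTranspose_mul_mul_same S)
  have hkey : S * (Sg * (Sᴴ * (Rin⁻¹ * S))) = R * (Rin⁻¹ * S) - S := by
    calc S * (Sg * (Sᴴ * (Rin⁻¹ * S))) = (S * Sg * Sᴴ) * (Rin⁻¹ * S) := by
          simp [Matrix.mul_assoc]
      _ = (R - Rin) * (Rin⁻¹ * S) := by rw [hSSgS]
      _ = R * (Rin⁻¹ * S) - Rin * (Rin⁻¹ * S) := Matrix.sub_mul _ _ _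
      _ = R * (Rin⁻¹ * S) - S := by rw [Matrix.mul_nonsing_inv_cancel_left _ _ hRindet]
  have hEinv : Estar * F = 1 := by
    calc Estar * F
        = Sg * Sg⁻¹ + Sg * (Sᴴ * (Rin⁻¹ * S)) - Sg * (Sᴴ * (R⁻¹ * (S * (Sg * Sg⁻¹))))
            - Sg * (Sᴴ * (R⁻¹ * (S * (Sg * (Sᴴ * (Rin⁻¹ * S)))))) := by
          rw [hE_def, hF_def]
          simp only [Matrix.sub_mul, Matrix.mul_add, Matrix.mul_assoc]
          abel
      _ = 1 + Sg * (Sᴴ * (Rin⁻¹ * S)) - Sg * (Sᴴ * (R⁻¹ * S))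
            - Sg * (Sᴴ * (R⁻¹ * (R * (Rin⁻¹ * S) - S))) := by
          rw [Matrix.mul_nonsing_inv _ hSgdet, hkey, Matrix.mul_one]
      _ = 1 + Sg * (Sᴴ * (Rin⁻¹ * S)) - Sg * (Sᴴ * (R⁻¹ * S))
            - Sg * (Sᴴ * (Rin⁻¹ * S - R⁻¹ * S)) := by
          rw [Matrix.mul_sub R⁻¹, Matrix.nonsing_inv_mul_cancel_left _ _ hRdet]
      _ = 1 := by simp only [Matrix.mul_sub]; abel
  have hEstar : Estar.PosDef := by
    have h := Matrix.inv_eq_left_inv hEinv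
    exact h ▸ hF.inv
  -- determinant identities
  have hdetE : Estar.det = Sg.det * (Rin.det * R.det⁻¹) := by
    have h1 : Estar = Sg * (1 - Sᴴ * (R⁻¹ * (S * Sg))) := by
      rw [hE_def]
      simp only [Matrix.mul_sub, Matrix.mul_one, Matrix.mul_assoc]
    have h2 : (1 : Matrix (Fin k) (Fin k) ℂ) - (R⁻¹ * (S * Sg)) * Sᴴ = R⁻¹ * Rin := by
      calc (1 : Matrix (Fin k) (Fin k) ℂ) - (R⁻¹ * (S * Sg)) * Sᴴ
          = 1 - R⁻¹ * (S * Sg * Sᴴ) := by simp only [Matrix.mul_assoc]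
        _ = 1 - R⁻¹ * (R - Rin) := by rw [hSSgS]
        _ = 1 - (R⁻¹ * R - R⁻¹ * Rin) := by rw [Matrix.mul_sub]
        _ = R⁻¹ * Rin := by rw [Matrix.nonsing_inv_mul _ hRdet]; abel
    rw [h1, det_mul, det_one_sub_mul_comm, h2, det_mul, det_nonsing_inv, Ring.inverse_eq_inv']
    ring
  have hdetI : ((1 : Matrix (Fin k) (Fin k) ℂ) + S * Sg * Sᴴ * Rin⁻¹).det
      = R.det * Rin.det⁻¹ := by
    have h1 : (1 : Matrix (Fin k) (Fin k) ℂ) + S * Sg * Sᴴ * Rin⁻¹ = R * Rin⁻¹ := by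
      rw [hR_def, Matrix.add_mul, Matrix.mul_nonsing_inv _ hRindet]; abel
    rw [h1, det_mul, det_nonsing_inv, Ring.inverse_eq_inv']
  -- real-part bookkeeping
  have o : ∀ {z : ℂ}, z.im = 0 → z = (z.re : ℂ) := fun h => Complex.ext rfl (by simp [h])
  have hSgRe := det_re_pos hSg
  have hRinRe := det_re_pos hRin
  have hRRe := det_re_pos hR
  have hEre := det_re_pos hEstar
  have hdetIre : ((1 : Matrix (Fin k) (Fin k) ℂ) + S * Sg * Sᴴ * Rin⁻¹).det.re
      = R.det.re * (Rin.det.re)⁻¹ := by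
    rw [hdetI, o hRRe.2, o hRinRe.2]
    simp [← Complex.ofReal_inv, ← Complex.ofReal_mul]
  have hdetEre : Estar.det.re = Sg.det.re * (Rin.det.re * (R.det.re)⁻¹) := by
    rw [hdetE, o hSgRe.2, o hRinRe.2, o hRRe.2]
    simp [← Complex.ofReal_inv, ← Complex.ofReal_mul]
  have hlogI : Real.log (((1 : Matrix (Fin k) (Fin k) ℂ) + S * Sg * Sᴴ * Rin⁻¹).det.re)
      = Real.log R.det.re - Real.log Rin.det.re := by
    rw [hdetIre, Real.log_mul hRRe.1.ne' (inv_ne_zero hRinRe.1.ne'), Real.log_inv]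
    ring
  have hlogE : Real.log Estar.det.re
      = Real.log Sg.det.re + Real.log Rin.det.re - Real.log R.det.re := by
    rw [hdetEre, Real.log_mul hSgRe.1.ne'
        (mul_ne_zero hRinRe.1.ne' (inv_ne_zero hRRe.1.ne')),
      Real.log_mul hRinRe.1.ne' (inv_ne_zero hRRe.1.ne'), Real.log_inv]
    ring
  have hval : (n : ℝ) + Real.log Sg.det.re -
      Real.log (((1 : Matrix (Fin k) (Fin k) ℂ) + S * Sg * Sᴴ * Rin⁻¹).det).re
      = (n : ℝ) + Real.log Estar.det.re := by
    rw [hlogI, hlogE]; ring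
  constructor
  · intro U W hW
    rw [hval, ← hR_def, key U, Matrix.mul_add, trace_add, Complex.add_re]
    have h1 := weighted_ineq hW hEstar
    have h2 := trace_mul_psd_nonneg hW (hR.posSemidef.mul_mul_conjTranspose_same (U - Ustar))
    linarith
  · rw [← hR_def, ← hE_def, ← hU_def]
    have h2 : Estar = Sg - Ustar * S * Sg := by rw [hE_def, hU_def]
    have hEU : Estar - Sg * Sᴴ * Ustarᴴ + Ustar * R * Ustarᴴ = Estar := by
      calc Estar - Sg * Sᴴ * Ustarᴴ + Ustar * R * Ustarᴴ
          = Sg - Ustar * S * Sg - Sg * Sᴴ * Ustarᴴ + Ustar * R * Ustarᴴ := by rw [h2]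
        _ = Estar := by
            rw [key Ustar, sub_self, Matrix.zero_mul, Matrix.zero_mul, add_zero]
    rw [hEU, Matrix.nonsing_inv_mul _ hEstar.det_pos.ne'.isUnit, Matrix.trace_one]
    have hdetinv : (Estar⁻¹).det.re = (Estar.det.re)⁻¹ := by
      rw [det_nonsing_inv, Ring.inverse_eq_inv', o hEre.2]
      simp [← Complex.ofReal_inv]
    rw [hdetinv, Real.log_inv, hval]
    simp
end

section
/- Let A be an n×n complex Hermitian positive semidefinite matrix, B an n×n complex Hermitian positive definite matrix, and U an m×n complex matrix such that U B Uᴴ is positive definite. Then det(I_m + (U A Uᴴ)(U B Uᴴ)⁻¹) and det(I_n + A B⁻¹) are positive real numbers and det(I_m + (U A Uᴴ)(U B Uᴴ)⁻¹) ≤ det(I_n + A B⁻¹); that is, the Gaussian mutual information after linear receive filtering by U never exceeds the unfiltered mutual information (the data processing inequality for linear filters). -/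
open Matrix
open scoped ComplexOrder
open scoped MatrixOrder

variable {k : Type*} [Fintype k] [DecidableEq k]

lemma aux_posDef_of_det_ne_zero {M : Matrix k k ℂ} (hM : M.PosSemidef)
    (h : M.det ≠ 0) : M.PosDef := by
  refine posDef_iff_dotProduct_mulVec.mpr ⟨hM.1, fun x hx => ?_⟩
  refine lt_of_le_of_ne (hM.dotProduct_mulVec_nonneg x) fun h0 => hx ?_
  have hMx : M *ᵥ x = 0 := (hM.dotProduct_mulVec_zero_iff x).mp h0.symm
  have : M⁻¹ *ᵥ (M *ᵥ x) = x := by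
    rw [mulVec_mulVec, nonsing_inv_mul M (isUnit_iff_ne_zero.mpr h), one_mulVec]
  rw [hMx, mulVec_zero] at this
  exact this.symm

lemma aux_one_le_det_one_add {N : Matrix k k ℂ} (hN : N.PosSemidef) :
    (1 : ℂ) ≤ (1 + N).det := by
  have hH := hN.1
  have hspec := hH.spectral_theorem
  rw [Unitary.conjStarAlgAut_apply] at hspec
  set W : Matrix k k ℂ := (hH.eigenvectorUnitary : Matrix k k ℂ) with hW
  have hWW : W * star W = 1 := Matrix.mem_unitaryGroup_iff.mp hH.eigenvectorUnitary.2
  have h1 : (1 : Matrix k k ℂ) + N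
      = W * (1 + diagonal (RCLike.ofReal ∘ hH.eigenvalues)) * star W := by
    rw [Matrix.mul_add, Matrix.add_mul, Matrix.mul_one, hWW, ← hspec]
  have hdet : ((1 : Matrix k k ℂ) + N).det = ((1 : Matrix k k ℂ) + diagonal (RCLike.ofReal ∘ hH.eigenvalues)).det := by
    rw [h1, Matrix.det_mul_right_comm, hWW, Matrix.one_mul]
  have h2 : (1 : Matrix k k ℂ) + diagonal (RCLike.ofReal ∘ hH.eigenvalues)
      = diagonal (fun i => 1 + (hH.eigenvalues i : ℂ)) := by
    rw [← Matrix.diagonal_one, Matrix.diagonal_add]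
    rfl
  rw [hdet, h2, Matrix.det_diagonal]
  have : (∏ i, (1 + (hH.eigenvalues i : ℂ))) = ((∏ i, (1 + hH.eigenvalues i) : ℝ) : ℂ) := by
    push_cast; rfl
  rw [this]
  have hr : (1 : ℝ) ≤ ∏ i, (1 + hH.eigenvalues i) := by
    calc (1 : ℝ) = ∏ _i : k, (1 : ℝ) := by simp
      _ ≤ _ := Finset.prod_le_prod (fun i _ => by norm_num)
          (fun i _ => by linarith [hN.eigenvalues_nonneg i])
  calc (1 : ℂ) = ((1 : ℝ) : ℂ) := by norm_num
    _ ≤ _ := by exact_mod_cast hr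

lemma aux_det_mono {X Y : Matrix k k ℂ} (hX : X.PosSemidef) (hYX : (Y - X).PosSemidef) :
    (1 + X).det ≤ (1 + Y).det := by
  have h1X : (1 + X).PosDef := Matrix.PosDef.add_posSemidef Matrix.PosDef.one hX
  set E := CFC.sqrt (1 + X) with hEdef
  have hE : E.PosSemidef := (CFC.sqrt_nonneg _).posSemidef
  have hEE : E * E = 1 + X := CFC.sqrt_mul_sqrt_self _ h1X.posSemidef.nonneg
  have hdetE : E.det ≠ 0 := by
    intro h0
    have : (1 + X).det = 0 := by rw [← hEE, Matrix.det_mul, h0, zero_mul]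
    exact h1X.det_pos.ne' this
  have hEunit : IsUnit E.det := isUnit_iff_ne_zero.mpr hdetE
  have hEinv : (E⁻¹)ᴴ = E⁻¹ := by rw [Matrix.conjTranspose_nonsing_inv, hE.1]
  set N := E⁻¹ * (Y - X) * E⁻¹ with hNdef
  have hN : N.PosSemidef := by
    have := hYX.conjTranspose_mul_mul_same (E⁻¹)
    rwa [hEinv] at this
  have hfact : (1 : Matrix k k ℂ) + Y = E * (1 + N) * E := by
    rw [Matrix.mul_add, Matrix.add_mul, Matrix.mul_one, hEE, hNdef]
    have : E * (E⁻¹ * (Y - X) * E⁻¹) * E = Y - X := by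
      rw [← Matrix.mul_assoc, ← Matrix.mul_assoc, Matrix.mul_nonsing_inv E hEunit,
        Matrix.one_mul, Matrix.mul_assoc, Matrix.nonsing_inv_mul E hEunit, Matrix.mul_one]
    rw [this]; abel
  have hdet : (1 + Y).det = (1 + X).det * (1 + N).det := by
    rw [hfact, Matrix.det_mul, Matrix.det_mul, ← hEE, Matrix.det_mul]; ring
  rw [hdet]
  have h1 : (1 : ℂ) ≤ (1 + N).det := aux_one_le_det_one_add hN
  exact le_mul_of_one_le_right h1X.det_pos.le h1

/-- data processing inequality for linear receive filters:
`det(I_m + (U A Uᴴ)(U B Uᴴ)⁻¹) ≤ det(I_n + A B⁻¹)`, both determinants being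
positive real numbers. -/
theorem data_processing_inequality_linear_filter {m n : ℕ}
    (hm : 0 < m) (hn : 0 < n)
    (A B : Matrix (Fin n) (Fin n) ℂ) (U : Matrix (Fin m) (Fin n) ℂ)
    (hA : A.PosSemidef) (hB : B.PosDef) (hUB : (U * B * Uᴴ).PosDef) :
    (((1 : Matrix (Fin m) (Fin m) ℂ) + (U * A * Uᴴ) * (U * B * Uᴴ)⁻¹).det.im = 0 ∧
      0 < ((1 : Matrix (Fin m) (Fin m) ℂ) + (U * A * Uᴴ) * (U * B * Uᴴ)⁻¹).det.re) ∧
    (((1 : Matrix (Fin n) (Fin n) ℂ) + A * B⁻¹).det.im = 0 ∧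
      0 < ((1 : Matrix (Fin n) (Fin n) ℂ) + A * B⁻¹).det.re) ∧
    ((1 : Matrix (Fin m) (Fin m) ℂ) + (U * A * Uᴴ) * (U * B * Uᴴ)⁻¹).det.re ≤
      ((1 : Matrix (Fin n) (Fin n) ℂ) + A * B⁻¹).det.re := by
  classical
  -- square root of B
  set C : Matrix (Fin n) (Fin n) ℂ := CFC.sqrt B with hCdef
  have hC : C.PosSemidef := (CFC.sqrt_nonneg _).posSemidef
  have hCC : C * C = B := CFC.sqrt_mul_sqrt_self _ hB.posSemidef.nonneg
  have hCdet : C.det ≠ 0 := fun h0 => hB.det_pos.ne' (by rw [← hCC, Matrix.det_mul, h0, zero_mul])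
  have hCunit : IsUnit C.det := isUnit_iff_ne_zero.mpr hCdet
  have hCiH : (C⁻¹)ᴴ = C⁻¹ := by rw [Matrix.conjTranspose_nonsing_inv, hC.1]
  -- S = C⁻¹ A C⁻¹
  set S : Matrix (Fin n) (Fin n) ℂ := C⁻¹ * A * C⁻¹ with hSdef
  have hS : S.PosSemidef := by
    have := hA.conjTranspose_mul_mul_same (C⁻¹); rwa [hCiH] at this
  have hCSC : C * S * C = A := by
    rw [hSdef]
    calc C * (C⁻¹ * A * C⁻¹) * C = C * C⁻¹ * A * (C⁻¹ * C) := by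
          simp only [Matrix.mul_assoc]
      _ = A := by
          rw [Matrix.mul_nonsing_inv C hCunit, Matrix.nonsing_inv_mul C hCunit,
            Matrix.one_mul, Matrix.mul_one]
  -- right-hand determinant
  have hRdet : ((1 : Matrix (Fin n) (Fin n) ℂ) + A * B⁻¹).det
      = ((1 : Matrix (Fin n) (Fin n) ℂ) + S).det := by
    have hBinv : B⁻¹ = C⁻¹ * C⁻¹ := by rw [← hCC, Matrix.mul_inv_rev]
    rw [hBinv, ← Matrix.mul_assoc, Matrix.det_one_add_mul_comm]
    congr 1
    rw [hSdef, Matrix.mul_assoc]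
  -- square root of U B Uᴴ
  set D : Matrix (Fin m) (Fin m) ℂ := CFC.sqrt (U * B * Uᴴ) with hDdef
  have hD : D.PosSemidef := (CFC.sqrt_nonneg _).posSemidef
  have hDD : D * D = U * B * Uᴴ := CFC.sqrt_mul_sqrt_self _ hUB.posSemidef.nonneg
  have hDdet : D.det ≠ 0 := fun h0 => hUB.det_pos.ne'
    (by rw [← hDD, Matrix.det_mul, h0, zero_mul])
  have hDunit : IsUnit D.det := isUnit_iff_ne_zero.mpr hDdet
  have hDiH : (D⁻¹)ᴴ = D⁻¹ := by rw [Matrix.conjTranspose_nonsing_inv, hD.1]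
  -- V with V Vᴴ = 1
  set V : Matrix (Fin m) (Fin n) ℂ := D⁻¹ * U * C with hVdef
  have hVH : Vᴴ = C * Uᴴ * D⁻¹ := by
    rw [hVdef, Matrix.conjTranspose_mul, Matrix.conjTranspose_mul, hC.1, hDiH, Matrix.mul_assoc]
  have hVV : V * Vᴴ = 1 := by
    have h1 : V * Vᴴ = D⁻¹ * (U * B * Uᴴ) * D⁻¹ := by
      rw [hVdef, hVH, ← hCC]; simp only [Matrix.mul_assoc]
    rw [h1, ← hDD]
    calc D⁻¹ * (D * D) * D⁻¹ = (D⁻¹ * D) * (D * D⁻¹) := by simp only [Matrix.mul_assoc]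
      _ = 1 := by rw [Matrix.nonsing_inv_mul D hDunit, Matrix.mul_nonsing_inv D hDunit,
            Matrix.one_mul]
  -- left-hand determinant
  have hLdet : ((1 : Matrix (Fin m) (Fin m) ℂ) + (U * A * Uᴴ) * (U * B * Uᴴ)⁻¹).det
      = ((1 : Matrix (Fin m) (Fin m) ℂ) + V * S * Vᴴ).det := by
    have hPinv : (U * B * Uᴴ)⁻¹ = D⁻¹ * D⁻¹ := by rw [← hDD, Matrix.mul_inv_rev]
    rw [hPinv, ← Matrix.mul_assoc, Matrix.det_one_add_mul_comm]
    congr 1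
    rw [← hCSC, hVdef, hVH]
    simp only [Matrix.mul_assoc]
  -- square root of S
  set G : Matrix (Fin n) (Fin n) ℂ := CFC.sqrt S with hGdef
  have hG : G.PosSemidef := (CFC.sqrt_nonneg _).posSemidef
  have hGG : G * G = S := CFC.sqrt_mul_sqrt_self _ hS.nonneg
  have hGH : Gᴴ = G := hG.1
  -- Q = compression of S
  set Q : Matrix (Fin n) (Fin n) ℂ := G * Vᴴ * (V * G) with hQdef
  have hQeq : Q = (V * G)ᴴ * (V * G) := by
    rw [hQdef, Matrix.conjTranspose_mul V G, hGH]
  have hQ : Q.PosSemidef := hQeq ▸ Matrix.posSemidef_conjTranspose_mul_self (V * G)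
  -- det(1 + V S Vᴴ) = det(1 + Q)
  have hdetVSV : ((1 : Matrix (Fin m) (Fin m) ℂ) + V * S * Vᴴ).det
      = ((1 : Matrix (Fin n) (Fin n) ℂ) + Q).det := by
    have h1 : V * S * Vᴴ = (V * G) * (G * Vᴴ) := by
      rw [← hGG]; simp only [Matrix.mul_assoc]
    rw [h1, Matrix.det_one_add_mul_comm, hQdef, Matrix.mul_assoc]
  -- 1 - Vᴴ V is psd
  have hP1 : ((1 : Matrix (Fin n) (Fin n) ℂ) - Vᴴ * V).PosSemidef := by
    have hproj : (Vᴴ * V) * (Vᴴ * V) = Vᴴ * V := by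
      calc (Vᴴ * V) * (Vᴴ * V) = Vᴴ * (V * Vᴴ) * V := by simp only [Matrix.mul_assoc]
        _ = Vᴴ * V := by rw [hVV, Matrix.mul_one]
    have hPH : (Vᴴ * V)ᴴ = Vᴴ * V := by
      rw [Matrix.conjTranspose_mul Vᴴ V, Matrix.conjTranspose_conjTranspose]
    have key : ((1 : Matrix (Fin n) (Fin n) ℂ) - Vᴴ * V)ᴴ * (1 - Vᴴ * V) = 1 - Vᴴ * V := by
      have hct : ((1 : Matrix (Fin n) (Fin n) ℂ) - Vᴴ * V)ᴴ = 1 - Vᴴ * V := by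
        rw [Matrix.conjTranspose_sub, Matrix.conjTranspose_one, hPH]
      rw [hct, Matrix.sub_mul, Matrix.one_mul, Matrix.mul_sub, Matrix.mul_one, hproj]
      abel
    rw [← key]
    exact Matrix.posSemidef_conjTranspose_mul_self _
  -- S - Q is psd
  have hSQ : (S - Q).PosSemidef := by
    have := hP1.conjTranspose_mul_mul_same G
    rw [hGH] at this
    have heq : G * (1 - Vᴴ * V) * G = S - Q := by
      rw [Matrix.mul_sub, Matrix.sub_mul, Matrix.mul_one, hGG, hQdef]
      simp only [Matrix.mul_assoc]
    rwa [heq] at this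
  -- assemble
  have hmono : ((1 : Matrix (Fin n) (Fin n) ℂ) + Q).det
      ≤ ((1 : Matrix (Fin n) (Fin n) ℂ) + S).det := aux_det_mono hQ hSQ
  have hQpos : (0 : ℂ) < ((1 : Matrix (Fin n) (Fin n) ℂ) + Q).det :=
    (Matrix.PosDef.add_posSemidef Matrix.PosDef.one hQ).det_pos
  have hSpos : (0 : ℂ) < ((1 : Matrix (Fin n) (Fin n) ℂ) + S).det :=
    (Matrix.PosDef.add_posSemidef Matrix.PosDef.one hS).det_pos
  have hL : ((1 : Matrix (Fin m) (Fin m) ℂ) + (U * A * Uᴴ) * (U * B * Uᴴ)⁻¹).det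
      = ((1 : Matrix (Fin n) (Fin n) ℂ) + Q).det := by rw [hLdet, hdetVSV]
  rw [hL, hRdet]
  rw [Complex.lt_def] at hQpos hSpos
  rw [Complex.le_def] at hmono
  simp only [Complex.zero_re, Complex.zero_im] at hQpos hSpos
  exact ⟨⟨hQpos.2.symm, hQpos.1⟩, ⟨hSpos.2.symm, hSpos.1⟩, hmono.1⟩
end
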